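/- Let F, F' be bounded functions globally defined on ℝ with lim_{t→∞} (F(t) − 2F'(t)t)/√t = 0 and F nonvanishing. Then for every constant c₀ > 0 there exists R > 0 such that c₀ = (F(R²) − 2F'(R²)R²)²/R²; consequently, in (ℝ³, g_F) there exists a Euclidean sphere centered at the origin with extrinsic curvature exactly c₀. -/
import Mathlib


/- If F and F' are bounded on ℝ, F is nonvanishing, and
   (F(t) − 2F'(t)t)/√t → 0 as t → ∞, then for every c₀ > 0 there is R > 0 with
   c₀ = (F(R²) − 2F'(R²)R²)²/R², i.e. in (ℝ³, g_F) there is a Euclidean sphere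
   centered at the origin with extrinsic curvature exactly c₀. -/

theorem stmt6 (F : ℝ → ℝ) (hF : Differentiable ℝ F)
    (hF' : Continuous (deriv F))
    (hFb : ∃ M : ℝ, ∀ t, |F t| ≤ M)
    (hF'b : ∃ M : ℝ, ∀ t, |deriv F t| ≤ M)
    (hne : ∀ t, F t ≠ 0)
    (hlim : Filter.Tendsto (fun t => (F t - 2 * deriv F t * t) / Real.sqrt t)
      Filter.atTop (nhds 0)) :
    ∀ c0 : ℝ, 0 < c0 → ∃ R : ℝ, 0 < R ∧
      c0 = (F (R ^ 2) - 2 * deriv F (R ^ 2) * R ^ 2) ^ 2 / R ^ 2 := by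
  intro c0 hc0
  set h : ℝ → ℝ := fun R => F (R ^ 2) - 2 * deriv F (R ^ 2) * R ^ 2 with hh
  have hhcont : Continuous h := by
    apply Continuous.sub
    · exact hF.continuous.comp (by continuity)
    · exact ((continuous_const.mul (hF'.comp (by continuity))).mul (by continuity))
  set g : ℝ → ℝ := fun R => (h R) ^ 2 / R ^ 2 with hg
  have hF0 : F 0 ≠ 0 := hne 0
  -- choose small a with g a ≥ c0
  have h0 : h 0 = F 0 := by simp [hh]
  have hcont0 : ∃ δ > 0, ∀ R, |R| < δ → |h R - F 0| < |F 0| / 2 := by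
    have := Metric.continuous_iff.mp hhcont 0 (|F 0| / 2) (by positivity)
    obtain ⟨δ, hδ, hδ2⟩ := this
    exact ⟨δ, hδ, fun R hR => by
      have := hδ2 R (by simpa [Real.dist_eq] using hR)
      simpa [Real.dist_eq, h0] using this⟩
  obtain ⟨δ, hδ, hδ2⟩ := hcont0
  set a : ℝ := min (δ / 2) (|F 0| / (2 * Real.sqrt c0)) with ha
  have hsc0 : 0 < Real.sqrt c0 := Real.sqrt_pos.mpr hc0
  have ha0 : 0 < a := lt_min (by linarith) (by positivity)
  have haδ : |a| < δ := by
    rw [abs_of_pos ha0]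
    calc a ≤ δ / 2 := min_le_left _ _
    _ < δ := by linarith
  have hha : |F 0| / 2 < |h a| := by
    have t1 := hδ2 a haδ
    have t2 : |F 0| - |h a| ≤ |h a - F 0| := by
      have := abs_sub_abs_le_abs_sub (F 0) (h a)
      rwa [abs_sub_comm (F 0) (h a)] at this
    linarith
  have hga : c0 ≤ g a := by
    have h1 : (|F 0| / 2) ^ 2 ≤ (h a) ^ 2 := by
      rw [← sq_abs (h a)]
      exact pow_le_pow_left₀ (by positivity) hha.le 2
    have h2 : a ≤ |F 0| / (2 * Real.sqrt c0) := min_le_right _ _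
    have h3 : a ^ 2 ≤ (|F 0| / (2 * Real.sqrt c0)) ^ 2 :=
      pow_le_pow_left₀ ha0.le h2 2
    have h4 : c0 * a ^ 2 ≤ (|F 0| / 2) ^ 2 := by
      calc c0 * a ^ 2 ≤ c0 * (|F 0| / (2 * Real.sqrt c0)) ^ 2 := by nlinarith
      _ = (|F 0|) ^ 2 / (4 * c0) * c0 := by
          rw [div_pow]
          rw [mul_pow, Real.sq_sqrt hc0.le]
          field_simp; ring
      _ = (|F 0| / 2) ^ 2 := by field_simp; ring
    rw [hg]
    rw [le_div_iff₀ (by positivity)]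
    calc c0 * a ^ 2 ≤ (|F 0| / 2) ^ 2 := h4
    _ ≤ (h a) ^ 2 := h1
  -- choose large b with g b ≤ c0
  have hlim2 := Metric.tendsto_nhds.mp hlim (Real.sqrt c0) hsc0
  obtain ⟨N, hN⟩ := Filter.eventually_atTop.mp hlim2
  set b : ℝ := max (a + 1) (Real.sqrt (max N 0) + 1) with hb
  have hab : a < b := lt_of_lt_of_le (by linarith) (le_max_left _ _)
  have hb0 : 0 < b := lt_trans ha0 hab
  have hbN : N ≤ b ^ 2 := by
    have h1 : Real.sqrt (max N 0) + 1 ≤ b := le_max_right _ _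
    have h2 : Real.sqrt (max N 0) ≤ b := by linarith
    have h3 : max N 0 ≤ b ^ 2 := by
      have := Real.sqrt_le_sqrt h2
      calc max N 0 = Real.sqrt (max N 0) ^ 2 := (Real.sq_sqrt (le_max_right _ _)).symm
      _ ≤ b ^ 2 := pow_le_pow_left₀ (Real.sqrt_nonneg _) h2 2
    exact le_trans (le_max_left _ _) h3
  have hgb : g b ≤ c0 := by
    have hq := hN (b ^ 2) hbN
    rw [Real.dist_eq, sub_zero, Real.sqrt_sq hb0.le] at hq
    have : ((F (b ^ 2) - 2 * deriv F (b ^ 2) * b ^ 2) / b) ^ 2 < c0 := by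
      rw [← Real.sq_sqrt hc0.le]
      rw [← sq_abs]
      exact pow_lt_pow_left₀ hq (abs_nonneg _) (by norm_num)
    rw [hg]
    simp only [hh]
    rw [div_pow] at this
    linarith
  -- IVT
  have hgc : ContinuousOn g (Set.Icc a b) := by
    apply ContinuousOn.div
    · exact (hhcont.pow 2).continuousOn
    · exact (continuous_pow 2).continuousOn
    · intro x hx
      have : 0 < x := lt_of_lt_of_le ha0 hx.1
      positivity
  have := intermediate_value_Icc' hab.le hgc
  have hc0mem : c0 ∈ Set.Icc (g b) (g a) := ⟨hgb, hga⟩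
  obtain ⟨R, hR, hgR⟩ := this hc0mem
  exact ⟨R, lt_of_lt_of_le ha0 hR.1, by rw [← hgR]⟩
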